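/- For all real T > 0 and b, d ∈ ℝ, ∫₀ᵀ [ 2t(T−t)/T + 2((T−t)²/T)·log((T−t)/T) − ((T−t)²/T)·(log((T−t)/T))² + ((d−b)·t/T + d·((T−t)/T)·log((T−t)/T))² ] dt = (7/54)(b−d)²T + (11/54)b²T − (7/54)dbT + (1/27)T². -/

import Mathlib

set_option maxHeartbeats 1000000
theorem cond_quad_dev_ir (T b d : ℝ) (hT : 0 < T) :
    ∫ t in (0:ℝ)..T,
        (2 * t * (T - t) / T + 2 * ((T - t) ^ 2 / T) * Real.log ((T - t) / T)
          - ((T - t) ^ 2 / T) * (Real.log ((T - t) / T)) ^ 2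
          + ((d - b) * t / T + d * ((T - t) / T) * Real.log ((T - t) / T)) ^ 2)
      = 7 / 54 * (b - d) ^ 2 * T + 11 / 54 * b ^ 2 * T - 7 / 54 * d * b * T
        + 1 / 27 * T ^ 2 := by
  have hT0 : T ≠ 0 := hT.ne'
  set L : ℝ → ℝ := fun x => Real.log ((T - x) / T) with hLdef
  set m : ℝ → ℝ := fun x => ((T - x) / T) * Real.log ((T - x) / T) with hmdef
  have hm : Continuous m := by
    have : Continuous fun x : ℝ => (T - x) / T := by continuity
    exact Real.continuous_mul_log.comp this
  -- constants
  set c1 : ℝ := 2 * (d - b) * d / T ^ 2 with hc1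
  set c2 : ℝ := d ^ 2 / T ^ 2 - 1 / T with hc2
  set a1 : ℝ := c1 * T / 4 with ha1
  set a2 : ℝ := 2 / (9 * T) - c1 / 9 - 2 * c2 / 27 with ha2
  set b1 : ℝ := -c1 * T / 2 with hb1
  set b2 : ℝ := -(2 / (3 * T)) + c1 / 3 + 2 * c2 / 9 with hb2
  set c3 : ℝ := -c2 / 3 with hc3
  set e3 : ℝ := -(2 / (3 * T)) + (d - b) ^ 2 / (3 * T ^ 2) with he3
  set F : ℝ → ℝ := fun x =>
    x ^ 2 + e3 * x ^ 3 + a1 * (T - x) ^ 2 + a2 * (T - x) ^ 3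
      + b1 * ((T - x) ^ 2 * L x) + b2 * ((T - x) ^ 3 * L x)
      + c3 * ((T - x) ^ 3 * (L x) ^ 2) with hFdef
  -- the integrand
  set f' : ℝ → ℝ := fun t =>
    2 * t * (T - t) / T + 2 * ((T - t) ^ 2 / T) * Real.log ((T - t) / T)
      - ((T - t) ^ 2 / T) * (Real.log ((T - t) / T)) ^ 2
      + ((d - b) * t / T + d * ((T - t) / T) * Real.log ((T - t) / T)) ^ 2 with hf'def
  -- integrand expressed through m
  have hfg : f' = fun t =>
      2 * t * (T - t) / T + 2 * (T - t) * m t - T * (m t) ^ 2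
        + ((d - b) * t / T + d * m t) ^ 2 := by
    funext t
    simp only [hf'def, hmdef]
    field_simp
  have hf'cont : Continuous f' := by
    rw [hfg]
    fun_prop
  -- F expressed through m
  have hFm : F = fun x =>
      x ^ 2 + e3 * x ^ 3 + a1 * (T - x) ^ 2 + a2 * (T - x) ^ 3
        + b1 * (T * (T - x) * m x) + b2 * (T * (T - x) ^ 2 * m x)
        + c3 * (T ^ 2 * (T - x) * (m x) ^ 2) := by
    funext x
    simp only [hFdef, hmdef, hLdef]
    field_simp
  have hFcont : Continuous F := by
    rw [hFm]
    fun_prop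
  have hderiv : ∀ x ∈ Set.Ioo (0 : ℝ) T, HasDerivAt F (f' x) x := by
    intro t ht
    have hst : 0 < T - t := by linarith [ht.2]
    have hyt : (0 : ℝ) < (T - t) / T := div_pos hst hT
    have hTx : HasDerivAt (fun x : ℝ => T - x) (-1) t := by
      simpa using (hasDerivAt_id t).const_sub T
    have hu : HasDerivAt (fun x : ℝ => (T - x) / T) (-1 / T) t := hTx.div_const T
    have hL' : HasDerivAt L ((-1 / T) / ((T - t) / T)) t := hu.log hyt.ne'
    have hs2 : HasDerivAt (fun x : ℝ => (T - x) ^ 2) (2 * (T - t) ^ 1 * (-1)) t := hTx.pow 2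
    have hs3 : HasDerivAt (fun x : ℝ => (T - x) ^ 3) (3 * (T - t) ^ 2 * (-1)) t := hTx.pow 3
    have h1 : HasDerivAt (fun x : ℝ => x ^ 2) ((2 : ℕ) * t ^ 1) t := hasDerivAt_pow 2 t
    have h2 : HasDerivAt (fun x : ℝ => e3 * x ^ 3) (e3 * ((3 : ℕ) * t ^ 2)) t :=
      (hasDerivAt_pow 3 t).const_mul e3
    have h3 := hs2.const_mul a1
    have h4 := hs3.const_mul a2
    have h5 := (hs2.mul hL').const_mul b1
    have h6 := (hs3.mul hL').const_mul b2
    have h7 := (hs3.mul (hL'.pow 2)).const_mul c3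
    have H := (((((h1.add h2).add h3).add h4).add h5).add h6).add h7
    convert H using 1 <;> try rfl
    simp only [hf'def, hc1, hc2, ha1, ha2, hb1, hb2, hc3, he3, hLdef, Pi.pow_apply]
    field_simp
    ring
  have hint : IntervalIntegrable f' MeasureTheory.volume 0 T :=
    hf'cont.intervalIntegrable 0 T
  have key := intervalIntegral.integral_eq_sub_of_hasDerivAt_of_le hT.le
    hFcont.continuousOn hderiv hint
  have hL0 : L 0 = 0 := by
    simp only [hLdef]
    rw [sub_zero, div_self hT0, Real.log_one]
  have hLT : L T = 0 := by
    simp only [hLdef]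
    rw [sub_self, zero_div, Real.log_zero]
  have hFT : F T = T ^ 2 + e3 * T ^ 3 := by
    simp only [hFdef, hLT]
    ring
  have hF0 : F 0 = a1 * T ^ 2 + a2 * T ^ 3 := by
    simp only [hFdef, hL0]
    ring
  rw [key, hFT, hF0, he3, ha1, ha2, hc1, hc2]
  field_simp
  ring
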